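/- Let n, p, T ∈ ℕ and let X₊, X₋ ∈ ℝ^{n×T}, U₋ ∈ ℝ^{p×T} be data matrices. Let N₁₁ ∈ ℝ^{n×n} be symmetric positive definite, N₂₂ ∈ ℝ^{T×T} symmetric negative definite, N₁₂ ∈ ℝ^{n×T}, N₂₁ = N₁₂ᵀ, and let 𝒩 denote the (n+T)×(n+T) block matrix [[N₁₁, N₁₂],[N₂₁, N₂₂]]. Let L ∈ ℝ^{N×N} be symmetric positive definite with smallest eigenvalue λ₁ and largest eigenvalue λ_N; set α = 2/(λ₁+λ_N) and ν = (λ_N-λ₁)/(λ_N+λ₁). Suppose there exist a symmetric positive definite Φ ∈ ℝ^{n×n}, a matrix F ∈ ℝ^{p×n}, and scalars ε ≥ 0, γ > 0, τ > 0 such that the symmetric (4n+2p)×(4n+2p) block matrix M - ε·Z·𝒩·Zᵀ is positive definite, where M has block rows/columns of sizes (n, n, p, n, p, n) given by M = [[Φ-γIₙ,0,0,0,0,0],[0,0,0,Φ,0,0],[0,0,-τν²I_p,F,0,0],[0,Φᵀ,Fᵀ,Φ,Fᵀ,0],[0,0,0,F,τI_p,0],[0,0,0,0,0,Iₙ]],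 and Z ∈ ℝ^{(4n+2p)×(n+T)} has block rows [Iₙ, X₊], [0, -X₋], [0, -U₋], [0,0], [0,0], [0,0]. Then for every pair (A,B) ∈ ℝ^{n×n} × ℝ^{n×p} satisfying [Iₙ, A, B]·W·𝒩·Wᵀ·[Iₙ, A, B]ᵀ ⪰ 0, where W is the block matrix with rows [Iₙ, X₊], [0, -X₋], [0, -U₋], the matrix I_N ⊗ A + α·L ⊗ (B·F·Φ⁻¹) is Schur stable. -/

import Mathlib

open Matrix
open scoped Kronecker

noncomputable section

/-- A complex square matrix is Schur stable if every eigenvalue has modulus `< 1`. -/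
def SchurStable {m : Type*} [Fintype m] [DecidableEq m] (M : Matrix m m ℂ) : Prop :=
  ∀ μ ∈ spectrum ℂ M, ‖μ‖ < 1

/-- A real square matrix is Schur stable if every complex eigenvalue has modulus `< 1`. -/
def SchurStableR {m : Type*} [Fintype m] [DecidableEq m] (M : Matrix m m ℝ) : Prop :=
  SchurStable (M.map Complex.ofReal)

/-- quadratic form of a real PosDef matrix at a complex vector has positive real part -/
lemma re_quadratic_pos {m : Type*} [Fintype m] {S : Matrix m m ℝ} (hS : S.PosDef)
    (w : m → ℂ) (hw : w ≠ 0) : 0 < (star w ⬝ᵥ (S.map Complex.ofReal *ᵥ w)).re := by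
  classical
  set a : m → ℝ := fun i => (w i).re with ha
  set b : m → ℝ := fun i => (w i).im with hb
  have key : (star w ⬝ᵥ (S.map Complex.ofReal *ᵥ w)).re
      = a ⬝ᵥ (S *ᵥ a) + b ⬝ᵥ (S *ᵥ b) := by
    simp only [dotProduct, mulVec, Pi.star_apply, map_apply]
    rw [Complex.re_sum]
    rw [← Finset.sum_add_distrib]
    refine Finset.sum_congr rfl fun i _ => ?_
    rw [Finset.mul_sum, Complex.re_sum, Finset.mul_sum, Finset.mul_sum,
      ← Finset.sum_add_distrib]
    refine Finset.sum_congr rfl fun j _ => ?_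
    simp only [Complex.mul_re, Complex.mul_im, Complex.ofReal_re, Complex.ofReal_im,
      Pi.star_apply, RCLike.star_def, Complex.conj_re, Complex.conj_im, ha, hb]
    ring
  have hab : a ≠ 0 ∨ b ≠ 0 := by
    by_contra h
    push_neg at h
    apply hw
    funext i
    have h1 : a i = 0 := by rw [h.1]; rfl
    have h2 : b i = 0 := by rw [h.2]; rfl
    exact Complex.ext h1 h2
  have hsa : 0 ≤ a ⬝ᵥ (S *ᵥ a) := by simpa using hS.posSemidef.dotProduct_mulVec_nonneg a
  have hsb : 0 ≤ b ⬝ᵥ (S *ᵥ b) := by simpa using hS.posSemidef.dotProduct_mulVec_nonneg b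
  rw [key]
  rcases hab with h | h
  · have := hS.dotProduct_mulVec_pos h
    simp only [star_trivial] at this
    linarith
  · have := hS.dotProduct_mulVec_pos h
    simp only [star_trivial] at this
    linarith

/-- eigenvector from spectrum membership over a field -/
lemma eig_of_mem_spectrum {m : Type*} [Fintype m] [DecidableEq m] {K : Type*} [Field K]
    {M : Matrix m m K} {μ : K} (h : μ ∈ spectrum K M) :
    ∃ v : m → K, v ≠ 0 ∧ M *ᵥ v = μ • v := by
  rw [spectrum.mem_iff] at h
  have hdet : (algebraMap K (Matrix m m K) μ - M).det = 0 := by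
    by_contra hd
    exact h ((Matrix.isUnit_iff_isUnit_det _).2 (isUnit_iff_ne_zero.2 hd))
  obtain ⟨v, hv, hmv⟩ := (Matrix.exists_mulVec_eq_zero_iff).2 hdet
  refine ⟨v, hv, ?_⟩
  rw [Algebra.algebraMap_eq_smul_one, sub_mulVec, smul_mulVec, one_mulVec] at hmv
  exact (sub_eq_zero.mp hmv).symm

/-- positive spectrum of a real PosDef matrix -/
lemma pos_of_mem_spectrum_posdef {m : Type*} [Fintype m] [DecidableEq m]
    {L : Matrix m m ℝ} (hL : L.PosDef) {lam : ℝ} (h : lam ∈ spectrum ℝ L) : 0 < lam := by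
  obtain ⟨v, hv, hmv⟩ := eig_of_mem_spectrum h
  have hq := hL.dotProduct_mulVec_pos hv
  simp only [star_trivial, hmv] at hq
  have hvv : 0 < v ⬝ᵥ v := by
    rcases (lt_or_eq_of_le (Finset.sum_nonneg fun i _ => mul_self_nonneg (v i)) :
        (0:ℝ) < v ⬝ᵥ v ∨ _) with h' | h'
    · exact h'
    · exact absurd (dotProduct_self_eq_zero.mp h'.symm) hv
  rw [dotProduct_smul, smul_eq_mul] at hq
  nlinarith [hq, hvv]

/-- elementary bound used for the S-procedure completion -/
lemma cross_bound {m : Type*} [Fintype m] (a b : m → ℝ) {δ ν τ : ℝ} (hτ : 0 < τ)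
    (hδ : |δ| ≤ ν) : 0 ≤ 2 * δ * (a ⬝ᵥ b) + τ * ν ^ 2 * (a ⬝ᵥ a) + (1 / τ) * (b ⬝ᵥ b) := by
  have hsq : ∀ t : ℝ, 0 ≤ t ^ 2 * (a ⬝ᵥ a) + 2 * t * (a ⬝ᵥ b) + b ⬝ᵥ b := by
    intro t
    have h0 : (0:ℝ) ≤ (t • a + b) ⬝ᵥ (t • a + b) :=
      Finset.sum_nonneg fun i _ => mul_self_nonneg _
    have hexp : (t • a + b) ⬝ᵥ (t • a + b)
        = t ^ 2 * (a ⬝ᵥ a) + 2 * t * (a ⬝ᵥ b) + b ⬝ᵥ b := by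
      simp only [add_dotProduct, dotProduct_add, smul_dotProduct, dotProduct_smul,
        smul_eq_mul, dotProduct_comm b a]
      ring
    linarith [hexp ▸ h0]
  have h1 := hsq (τ * ν)
  have h2 := hsq (-(τ * ν))
  have habs := abs_le.mp hδ
  have hE : 0 ≤ τ * (2 * δ * (a ⬝ᵥ b)) + (τ * ν) ^ 2 * (a ⬝ᵥ a) + b ⬝ᵥ b := by
    rcases le_or_gt 0 (a ⬝ᵥ b) with hs | hs
    · nlinarith [mul_nonneg (mul_nonneg hτ.le (by linarith : (0:ℝ) ≤ δ + ν)) hs]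
    · nlinarith [mul_nonneg (mul_nonneg hτ.le (by linarith : (0:ℝ) ≤ ν - δ)) (by linarith : (0:ℝ) ≤ -(a ⬝ᵥ b))]
  have heq : 2 * δ * (a ⬝ᵥ b) + τ * ν ^ 2 * (a ⬝ᵥ a) + (1 / τ) * (b ⬝ᵥ b)
      = (1 / τ) * (τ * (2 * δ * (a ⬝ᵥ b)) + (τ * ν) ^ 2 * (a ⬝ᵥ a) + b ⬝ᵥ b) := by
    field_simp
  rw [heq]
  exact mul_nonneg (by positivity) hE

lemma sum_elim_add_sum_elim {R : Type*} [AddCommMonoid R] {m₁ m₂ : Type*}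
    (a c : m₁ → R) (b d : m₂ → R) :
    Sum.elim a b + Sum.elim c d = Sum.elim (a + c) (b + d) := by
  funext j
  cases j <;> rfl

lemma sum_elim_vecMul_fromBlocks {R : Type*} [CommRing R]
    {m₁ m₂ n₁ n₂ : Type*} [Fintype m₁] [Fintype m₂]
    (v₁ : m₁ → R) (v₂ : m₂ → R) (A : Matrix m₁ n₁ R) (B : Matrix m₁ n₂ R)
    (C : Matrix m₂ n₁ R) (D : Matrix m₂ n₂ R) :
    Sum.elim v₁ v₂ ᵥ* fromBlocks A B C D
      = Sum.elim (v₁ ᵥ* A + v₂ ᵥ* C) (v₁ ᵥ* B + v₂ ᵥ* D) := by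
  rw [← fromRows_fromCols_eq_fromBlocks, sumElim_vecMul_fromRows, vecMul_fromCols,
    vecMul_fromCols]
  exact sum_elim_add_sum_elim _ _ _ _

lemma map_mul_ofReal {a b c : Type*} [Fintype b] (P : Matrix a b ℝ) (Q : Matrix b c ℝ) :
    (P * Q).map Complex.ofReal = P.map Complex.ofReal * Q.map Complex.ofReal := by
  ext i j
  simp only [map_apply, mul_apply]
  push_cast
  try rfl

lemma realMat_mulVec_star {a b : Type*} [Fintype b] (P : Matrix a b ℝ) (u : b → ℂ) :
    P.map Complex.ofReal *ᵥ star u = star (P.map Complex.ofReal *ᵥ u) := by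
  funext i
  simp only [mulVec, dotProduct, map_apply, Pi.star_apply, star_sum, star_mul',
    Complex.star_def, Complex.conj_ofReal]
  try exact Finset.sum_congr rfl fun j _ => mul_comm _ _

lemma dot_tmulVec {R : Type*} [CommRing R] {a b : Type*} [Fintype a] [Fintype b]
    (u : b → R) (P : Matrix a b R) (x : a → R) :
    u ⬝ᵥ (Pᵀ *ᵥ x) = x ⬝ᵥ (P *ᵥ u) := by
  rw [dotProduct_mulVec, vecMul_transpose, dotProduct_comm]

section StepB

variable {n p T : ℕ}

lemma stepB
    (Xplus Xminus : Matrix (Fin n) (Fin T) ℝ) (Uminus : Matrix (Fin p) (Fin T) ℝ)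
    (𝒩 : Matrix (Fin n ⊕ Fin T) (Fin n ⊕ Fin T) ℝ)
    (Φ : Matrix (Fin n) (Fin n) ℝ)
    (F : Matrix (Fin p) (Fin n) ℝ)
    (ε γ τ ν : ℝ) (hε : 0 ≤ ε)
    (M : Matrix ((Fin n ⊕ Fin n) ⊕ ((Fin p ⊕ Fin n) ⊕ (Fin p ⊕ Fin n)))
        ((Fin n ⊕ Fin n) ⊕ ((Fin p ⊕ Fin n) ⊕ (Fin p ⊕ Fin n))) ℝ)
    (hM : M = Matrix.fromBlocks
      (Matrix.fromBlocks (Φ - γ • 1) 0 0 0)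
      (Matrix.fromCols (Matrix.fromBlocks 0 0 0 Φ) 0)
      (Matrix.fromRows (Matrix.fromBlocks 0 0 0 Φᵀ) 0)
      (Matrix.fromBlocks
        (Matrix.fromBlocks ((-(τ * ν ^ 2)) • 1) F Fᵀ Φ)
        (Matrix.fromBlocks 0 0 Fᵀ 0)
        (Matrix.fromBlocks 0 F 0 0)
        (Matrix.fromBlocks (τ • 1) 0 0 1)))
    (Z : Matrix ((Fin n ⊕ Fin n) ⊕ ((Fin p ⊕ Fin n) ⊕ (Fin p ⊕ Fin n))) (Fin n ⊕ Fin T) ℝ)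
    (hZ : Z = Matrix.fromRows
      (Matrix.fromBlocks 1 Xplus 0 (-Xminus))
      (Matrix.fromRows (Matrix.fromBlocks 0 (-Uminus) 0 0) 0))
    (hLMI : (M - ε • (Z * 𝒩 * Zᵀ)).PosDef)
    (W : Matrix (Fin n ⊕ (Fin n ⊕ Fin p)) (Fin n ⊕ Fin T) ℝ)
    (hW : W = Matrix.fromBlocks 1 Xplus 0 (Matrix.fromRows (-Xminus) (-Uminus)))
    (A : Matrix (Fin n) (Fin n) ℝ) (B : Matrix (Fin n) (Fin p) ℝ)
    (hcons : (Matrix.fromCols (1 : Matrix (Fin n) (Fin n) ℝ) (Matrix.fromCols A B) * W * 𝒩 *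
          Wᵀ * (Matrix.fromCols (1 : Matrix (Fin n) (Fin n) ℝ)
            (Matrix.fromCols A B))ᵀ).PosSemidef) :
    ∀ (x y : Fin n → ℝ) (z : Fin p → ℝ), ¬(x = 0 ∧ y = 0 ∧ z = 0) →
      0 < x ⬝ᵥ (Φ *ᵥ x) - γ * (x ⬝ᵥ x) - τ * ν ^ 2 * ((x ᵥ* B) ⬝ᵥ (x ᵥ* B))
        + 2 * ((x ᵥ* A) ⬝ᵥ (Φ *ᵥ y)) + 2 * ((x ᵥ* B) ⬝ᵥ (F *ᵥ y)) + y ⬝ᵥ (Φ *ᵥ y)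
        + 2 * (z ⬝ᵥ (F *ᵥ y)) + τ * (z ⬝ᵥ z) := by
  intro x y z hxyz
  set v : ((Fin n ⊕ Fin n) ⊕ ((Fin p ⊕ Fin n) ⊕ (Fin p ⊕ Fin n))) → ℝ :=
    Sum.elim (Sum.elim x (x ᵥ* A)) (Sum.elim (Sum.elim (x ᵥ* B) y) (Sum.elim z 0)) with hvdef
  have hv : v ≠ 0 := by
    intro h0
    apply hxyz
    refine ⟨funext fun i => ?_, funext fun i => ?_, funext fun i => ?_⟩
    · exact congrFun h0 (Sum.inl (Sum.inl i))
    · exact congrFun h0 (Sum.inr (Sum.inl (Sum.inr i)))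
    · exact congrFun h0 (Sum.inr (Sum.inr (Sum.inl i)))
  have h0 := hLMI.dotProduct_mulVec_pos hv
  rw [star_trivial, sub_mulVec, dotProduct_sub] at h0
  have huZ : v ᵥ* Z = Sum.elim x (x ᵥ* Xplus - x ᵥ* (A * Xminus) - x ᵥ* (B * Uminus)) := by
    rw [hZ, hvdef, sumElim_vecMul_fromRows, sum_elim_vecMul_fromBlocks,
      sumElim_vecMul_fromRows, sum_elim_vecMul_fromBlocks]
    funext j
    rcases j with j | j
    · simp
    · simp [vecMul_vecMul, sub_eq_add_neg, vecMul_neg]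
  have hSpart : v ⬝ᵥ ((ε • (Z * 𝒩 * Zᵀ)) *ᵥ v)
      = ε * ((v ᵥ* Z) ⬝ᵥ (𝒩 *ᵥ (v ᵥ* Z))) := by
    rw [smul_mulVec, dotProduct_smul, smul_eq_mul, Matrix.mul_assoc Z 𝒩 Zᵀ,
      ← mulVec_mulVec, ← mulVec_mulVec, dotProduct_mulVec, mulVec_transpose]
  have hcons2 : 0 ≤ (v ᵥ* Z) ⬝ᵥ (𝒩 *ᵥ (v ᵥ* Z)) := by
    have hx := hcons.dotProduct_mulVec_nonneg x
    rw [star_trivial] at hx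
    have hx2 : 0 ≤ x ⬝ᵥ (((fromCols (1 : Matrix (Fin n) (Fin n) ℝ) (fromCols A B) * W) * 𝒩 *
        (fromCols (1 : Matrix (Fin n) (Fin n) ℝ) (fromCols A B) * W)ᵀ) *ᵥ x) := by
      rw [show (fromCols (1 : Matrix (Fin n) (Fin n) ℝ) (fromCols A B) * W) * 𝒩 *
          (fromCols (1 : Matrix (Fin n) (Fin n) ℝ) (fromCols A B) * W)ᵀ
          = fromCols (1 : Matrix (Fin n) (Fin n) ℝ) (fromCols A B) * W * 𝒩 * Wᵀ *
            (fromCols (1 : Matrix (Fin n) (Fin n) ℝ) (fromCols A B))ᵀ from by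
        rw [transpose_mul, ← Matrix.mul_assoc]]
      exact hx
    rw [← mulVec_mulVec, ← mulVec_mulVec, dotProduct_mulVec, mulVec_transpose] at hx2
    have hxE : x ᵥ* (fromCols (1 : Matrix (Fin n) (Fin n) ℝ) (fromCols A B) * W) = v ᵥ* Z := by
      rw [huZ, ← vecMul_vecMul, hW, vecMul_fromCols, sum_elim_vecMul_fromBlocks]
      funext j
      rcases j with j | j
      · simp
      · simp [vecMul_vecMul, sub_eq_add_neg, vecMul_neg]
        ring
    rw [hxE] at hx2
    exact hx2
  have hMpart : v ⬝ᵥ (M *ᵥ v)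
      = x ⬝ᵥ (Φ *ᵥ x) - γ * (x ⬝ᵥ x) - τ * ν ^ 2 * ((x ᵥ* B) ⬝ᵥ (x ᵥ* B))
        + 2 * ((x ᵥ* A) ⬝ᵥ (Φ *ᵥ y)) + 2 * ((x ᵥ* B) ⬝ᵥ (F *ᵥ y)) + y ⬝ᵥ (Φ *ᵥ y)
        + 2 * (z ⬝ᵥ (F *ᵥ y)) + τ * (z ⬝ᵥ z) := by
    rw [hM, hvdef]
    simp only [fromBlocks_mulVec, fromRows_mulVec, fromCols_mulVec_sumElim,
      zero_mulVec, mulVec_zero, add_zero, zero_add, sub_mulVec, smul_mulVec,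
      one_mulVec, sumElim_dotProduct_sumElim, dotProduct_add, dotProduct_sub,
      dotProduct_smul, smul_eq_mul, dotProduct_zero, zero_dotProduct, neg_smul,
      dotProduct_neg, neg_mul, neg_mulVec, Sum.elim_comp_inl, Sum.elim_comp_inr]
    rw [dot_tmulVec y Φ (x ᵥ* A), dot_tmulVec y F (x ᵥ* B), dot_tmulVec y F z]
    ring
  rw [hMpart, hSpart] at h0
  have hnn := mul_nonneg hε hcons2
  linarith

end StepB

section StepC

variable {n p : ℕ}

lemma stepC
    (Φ : Matrix (Fin n) (Fin n) ℝ) (hΦ : Φ.PosDef)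
    (F : Matrix (Fin p) (Fin n) ℝ) (A : Matrix (Fin n) (Fin n) ℝ) (B : Matrix (Fin n) (Fin p) ℝ)
    (γ τ ν : ℝ) (hγ : 0 < γ) (hτ : 0 < τ)
    (hQ : ∀ (x y : Fin n → ℝ) (z : Fin p → ℝ), ¬(x = 0 ∧ y = 0 ∧ z = 0) →
      0 < x ⬝ᵥ (Φ *ᵥ x) - γ * (x ⬝ᵥ x) - τ * ν ^ 2 * ((x ᵥ* B) ⬝ᵥ (x ᵥ* B))
        + 2 * ((x ᵥ* A) ⬝ᵥ (Φ *ᵥ y)) + 2 * ((x ᵥ* B) ⬝ᵥ (F *ᵥ y)) + y ⬝ᵥ (Φ *ᵥ y)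
        + 2 * (z ⬝ᵥ (F *ᵥ y)) + τ * (z ⬝ᵥ z))
    (c : ℝ) (hδ : |c - 1| ≤ ν) :
    (fromBlocks Φ (A * Φ + c • (B * F)) (A * Φ + c • (B * F))ᵀ Φ).PosDef := by
  have hΦt : Φᵀ = Φ := by
    rw [← conjTranspose_eq_transpose_of_trivial]
    exact hΦ.isHermitian
  refine posDef_iff_dotProduct_mulVec.mpr ⟨?_, ?_⟩
  · show _ᴴ = _
    rw [conjTranspose_eq_transpose_of_trivial, fromBlocks_transpose, transpose_transpose, hΦt]
  · intro v hv
    rw [star_trivial]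
    set x := v ∘ Sum.inl with hxdef
    set y := v ∘ Sum.inr with hydef
    have hvsum : v = Sum.elim x y := by
      funext j; cases j <;> rfl
    have hxy : ¬(x = 0 ∧ y = 0) := by
      rintro ⟨h1, h2⟩
      apply hv
      rw [hvsum, h1, h2]
      funext j; cases j <;> rfl
    have hql' : 0 < x ⬝ᵥ (Φ *ᵥ x) - γ * (x ⬝ᵥ x) - τ * ν ^ 2 * ((x ᵥ* B) ⬝ᵥ (x ᵥ* B))
        + 2 * ((x ᵥ* A) ⬝ᵥ (Φ *ᵥ y)) + 2 * ((x ᵥ* B) ⬝ᵥ (F *ᵥ y)) + y ⬝ᵥ (Φ *ᵥ y)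
        - (1/τ) * ((F *ᵥ y) ⬝ᵥ (F *ᵥ y)) := by
      have h := hQ x y ((-(1/τ)) • (F *ᵥ y)) (by tauto)
      have h1 : ((-(1/τ)) • (F *ᵥ y)) ⬝ᵥ (F *ᵥ y)
          = -(1/τ) * ((F *ᵥ y) ⬝ᵥ (F *ᵥ y)) := by
        rw [smul_dotProduct, smul_eq_mul]
      have h2 : ((-(1/τ)) • (F *ᵥ y)) ⬝ᵥ ((-(1/τ)) • (F *ᵥ y))
          = (1/τ) * (1/τ) * ((F *ᵥ y) ⬝ᵥ (F *ᵥ y)) := by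
        rw [smul_dotProduct, dotProduct_smul, smul_eq_mul, smul_eq_mul]
        ring
      rw [h1, h2] at h
      have h3 : τ * ((1/τ) * (1/τ) * ((F *ᵥ y) ⬝ᵥ (F *ᵥ y)))
          = (1/τ) * ((F *ᵥ y) ⬝ᵥ (F *ᵥ y)) := by
        field_simp
      linarith [h]
    have hcb := cross_bound (x ᵥ* B) (F *ᵥ y) hτ hδ
    have hγx : 0 ≤ γ * (x ⬝ᵥ x) :=
      mul_nonneg hγ.le (Finset.sum_nonneg fun i _ => mul_self_nonneg _)
    rw [hvsum, fromBlocks_mulVec, sumElim_dotProduct_sumElim]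
    simp only [Sum.elim_comp_inl, Sum.elim_comp_inr]
    rw [dotProduct_add, dotProduct_add, dot_tmulVec y (A * Φ + c • (B * F)) x]
    simp only [add_mulVec, smul_mulVec, dotProduct_add, dotProduct_smul, smul_eq_mul]
    have e1 : x ⬝ᵥ ((A * Φ) *ᵥ y) = (x ᵥ* A) ⬝ᵥ (Φ *ᵥ y) := by
      rw [← mulVec_mulVec, dotProduct_mulVec]
    have e2 : x ⬝ᵥ ((B * F) *ᵥ y) = (x ᵥ* B) ⬝ᵥ (F *ᵥ y) := by
      rw [← mulVec_mulVec, dotProduct_mulVec]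
    rw [e1, e2]
    linarith [hql', hcb, hγx]

end StepC

section StepDE

lemma stepDE {n N : ℕ} (L : Matrix (Fin N) (Fin N) ℝ) (hLsymm : L.IsSymm) (hLpd : L.PosDef)
    (lam1 lamN α : ℝ) (hbounds : ∀ μ ∈ spectrum ℝ L, lam1 ≤ μ ∧ μ ≤ lamN)
    (Φ : Matrix (Fin n) (Fin n) ℝ) (hΦ : Φ.PosDef)
    (A M₀ : Matrix (Fin n) (Fin n) ℝ)
    (hR : ∀ lam : ℝ, lam1 ≤ lam → lam ≤ lamN →
      (fromBlocks Φ ((A + (α * lam) • M₀) * Φ) ((A + (α * lam) • M₀) * Φ)ᵀ Φ).PosDef) :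
    SchurStableR ((1 : Matrix (Fin N) (Fin N) ℝ) ⊗ₖ A + (α • L) ⊗ₖ M₀) := by
  intro μ hμ
  obtain ⟨v, hv, hveq⟩ := eig_of_mem_spectrum hμ
  have hL' : L.IsHermitian := hLpd.1
  -- pointwise eigenvalue equation
  have hpt : ∀ (i : Fin N) (k : Fin n),
      (∑ l, ((A k l : ℝ) : ℂ) * v (i, l))
        + ∑ j, ((α * L i j : ℝ) : ℂ) * ∑ l, ((M₀ k l : ℝ) : ℂ) * v (j, l)
        = μ * v (i, k) := by
    intro i k
    have h1 := congrFun hveq (i, k)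
    simp only [Matrix.mulVec, dotProduct, Matrix.map_apply, Matrix.add_apply,
      Matrix.kroneckerMap_apply, Matrix.smul_apply, smul_eq_mul, Pi.smul_apply,
      Fintype.sum_prod_type] at h1
    rw [← h1]
    have hsplit : ∀ j : Fin N, (∑ l, (((1 : Matrix (Fin N) (Fin N) ℝ) i j * A k l
          + α * L i j * M₀ k l : ℝ) : ℂ) * v (j, l))
        = (if i = j then ∑ l, ((A k l : ℝ) : ℂ) * v (j, l) else 0)
          + ((α * L i j : ℝ) : ℂ) * ∑ l, ((M₀ k l : ℝ) : ℂ) * v (j, l) := by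
      intro j
      rw [Matrix.one_apply]
      split_ifs with h
      · rw [Finset.mul_sum, ← Finset.sum_add_distrib]
        refine Finset.sum_congr rfl fun l _ => ?_
        push_cast
        ring
      · rw [zero_add, Finset.mul_sum]
        refine Finset.sum_congr rfl fun l _ => ?_
        push_cast
        ring
    rw [Finset.sum_congr rfl fun j _ => hsplit j, Finset.sum_add_distrib,
      Finset.sum_ite_eq, if_pos (Finset.mem_univ i)]
  -- eigenbasis of L
  set u : Fin N → Fin N → ℝ := fun s => ⇑(hL'.eigenvectorBasis s) with hudef
  have hu : ∀ s, L *ᵥ u s = hL'.eigenvalues s • u s := fun s => hL'.mulVec_eigenvectorBasis s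
  set w : Fin N → Fin n → ℂ := fun s k => ∑ i, ((u s i : ℝ) : ℂ) * v (i, k) with hwdef
  have hLu : ∀ s j, ∑ i, u s i * L i j = hL'.eigenvalues s * u s j := by
    intro s j
    have h2 := congrFun (hu s) j
    simp only [Matrix.mulVec, dotProduct, Pi.smul_apply, smul_eq_mul] at h2
    rw [← h2]
    refine Finset.sum_congr rfl fun i _ => ?_
    have hsy : L i j = L j i := by
      have h3 := congrFun (congrFun hLsymm j) i
      rw [transpose_apply] at h3
      exact h3
    rw [mul_comm, hsy]
  -- eigen equation for the projections
  have heig : ∀ s, (A.map Complex.ofReal) *ᵥ w s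
      + ((α * hL'.eigenvalues s : ℝ) : ℂ) • ((M₀.map Complex.ofReal) *ᵥ w s) = μ • w s := by
    intro s
    funext k
    simp only [Pi.add_apply, Pi.smul_apply, smul_eq_mul, Matrix.mulVec, dotProduct,
      Matrix.map_apply, hwdef]
    have hswap : ∀ P : Fin n → ℝ, (∑ l, ((P l : ℝ) : ℂ) * (∑ i, ((u s i : ℝ) : ℂ) * v (i, l)))
        = ∑ i, ((u s i : ℝ) : ℂ) * (∑ l, ((P l : ℝ) : ℂ) * v (i, l)) := by
      intro P
      simp_rw [Finset.mul_sum]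
      rw [Finset.sum_comm]
      exact Finset.sum_congr rfl fun i _ => Finset.sum_congr rfl fun l _ => by ring
    rw [hswap (A k), hswap (M₀ k)]
    have hterm : ∀ j, (∑ i, ((u s i : ℝ) : ℂ) * (((α * L i j : ℝ) : ℂ)
          * (∑ l, ((M₀ k l : ℝ) : ℂ) * v (j, l))))
        = ((α * hL'.eigenvalues s : ℝ) : ℂ) * (((u s j : ℝ) : ℂ)
          * (∑ l, ((M₀ k l : ℝ) : ℂ) * v (j, l))) := by
      intro j
      have e : ∀ i, ((u s i : ℝ) : ℂ) * (((α * L i j : ℝ) : ℂ)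
            * (∑ l, ((M₀ k l : ℝ) : ℂ) * v (j, l)))
          = ((u s i * (α * L i j) : ℝ) : ℂ) * (∑ l, ((M₀ k l : ℝ) : ℂ) * v (j, l)) := by
        intro i
        push_cast
        ring
      rw [Finset.sum_congr rfl fun i _ => e i, ← Finset.sum_mul]
      have e2 : (∑ i, (u s i * (α * L i j) : ℝ)) = α * hL'.eigenvalues s * u s j := by
        have e3 : (∑ i, (u s i * (α * L i j) : ℝ)) = α * ∑ i, u s i * L i j := by
          rw [Finset.mul_sum]
          exact Finset.sum_congr rfl fun i _ => by ring
        rw [e3, hLu s j]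
        ring
      rw [← Complex.ofReal_sum, e2]
      push_cast
      ring
    have hkey2 : (∑ i, ((u s i : ℝ) : ℂ) * (∑ j, ((α * L i j : ℝ) : ℂ)
          * (∑ l, ((M₀ k l : ℝ) : ℂ) * v (j, l))))
        = ((α * hL'.eigenvalues s : ℝ) : ℂ) * ∑ j, ((u s j : ℝ) : ℂ)
          * (∑ l, ((M₀ k l : ℝ) : ℂ) * v (j, l)) := by
      rw [Finset.sum_congr rfl fun i _ => Finset.mul_sum _ _ _, Finset.sum_comm,
        Finset.sum_congr rfl fun j _ => hterm j, ← Finset.mul_sum]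
    have hfin : (∑ i, ((u s i : ℝ) : ℂ) * (∑ l, ((A k l : ℝ) : ℂ) * v (i, l)))
          + (∑ i, ((u s i : ℝ) : ℂ) * (∑ j, ((α * L i j : ℝ) : ℂ)
            * (∑ l, ((M₀ k l : ℝ) : ℂ) * v (j, l))))
        = ∑ i, μ * (((u s i : ℝ) : ℂ) * v (i, k)) := by
      rw [← Finset.sum_add_distrib]
      refine Finset.sum_congr rfl fun i _ => ?_
      rw [← mul_add, hpt i k]
      ring
    rw [← hkey2, hfin, Finset.mul_sum]
  -- some projection is nonzero
  have hwex : ∃ s, w s ≠ 0 := by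
    by_contra hall
    push_neg at hall
    apply hv
    funext ik
    obtain ⟨i, k⟩ := ik
    have hcU : (fun i' => v (i', k)) ᵥ* (((hL'.eigenvectorUnitary :
        Matrix (Fin N) (Fin N) ℝ)).map Complex.ofReal) = 0 := by
      funext s
      have h4 := congrFun (hall s) k
      simp only [hwdef, Pi.zero_apply] at h4
      simp only [Matrix.vecMul, dotProduct, Matrix.map_apply,
        Matrix.IsHermitian.eigenvectorUnitary_apply, Pi.zero_apply]
      rw [← h4]
      exact Finset.sum_congr rfl fun i' _ => by rw [mul_comm]
    have hU1 : ((hL'.eigenvectorUnitary : Matrix (Fin N) (Fin N) ℝ)).map Complex.ofReal *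
        ((star (hL'.eigenvectorUnitary : Matrix (Fin N) (Fin N) ℝ)).map Complex.ofReal)
        = 1 := by
      rw [← map_mul_ofReal, Matrix.mem_unitaryGroup_iff.mp hL'.eigenvectorUnitary.2]
      exact Matrix.map_one _ Complex.ofReal_zero Complex.ofReal_one
    have hc0 : (fun i' => v (i', k)) = 0 := by
      calc (fun i' => v (i', k))
          = (fun i' => v (i', k)) ᵥ* (1 : Matrix (Fin N) (Fin N) ℂ) := (vecMul_one _).symm
        _ = ((fun i' => v (i', k)) ᵥ* (((hL'.eigenvectorUnitary :
              Matrix (Fin N) (Fin N) ℝ)).map Complex.ofReal)) ᵥ*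
              ((star (hL'.eigenvectorUnitary : Matrix (Fin N) (Fin N) ℝ)).map Complex.ofReal) := by
            rw [vecMul_vecMul, hU1]
        _ = 0 := by rw [hcU, zero_vecMul]
    exact congrFun hc0 i
  obtain ⟨s, hws⟩ := hwex
  -- bounds for the eigenvalue
  have hspec := hL'.eigenvalues_mem_spectrum_real s
  obtain ⟨hlo, hhi⟩ := hbounds _ hspec
  have hRs := hR (hL'.eigenvalues s) hlo hhi
  -- complex computation
  have hΦdet : IsUnit Φ.det := hΦ.det_pos.ne'.isUnit
  have hΦc1 : (Φ.map Complex.ofReal) * (Φ⁻¹.map Complex.ofReal) = 1 := by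
    rw [← map_mul_ofReal, Matrix.mul_nonsing_inv _ hΦdet]
    exact Matrix.map_one _ Complex.ofReal_zero Complex.ofReal_one
  set y₀ : Fin n → ℂ := (Φ⁻¹.map Complex.ofReal) *ᵥ w s with hy₀def
  have hwy : (Φ.map Complex.ofReal) *ᵥ y₀ = w s := by
    rw [hy₀def, mulVec_mulVec, hΦc1, one_mulVec]
  have hy0 : y₀ ≠ 0 := by
    intro h
    apply hws
    rw [← hwy, h, mulVec_zero]
  set G : Matrix (Fin n) (Fin n) ℝ := (A + (α * hL'.eigenvalues s) • M₀) * Φ with hGdef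
  have hGc : ((A + (α * hL'.eigenvalues s) • M₀).map Complex.ofReal)
      = A.map Complex.ofReal + ((α * hL'.eigenvalues s : ℝ) : ℂ) • M₀.map Complex.ofReal := by
    ext i j
    simp only [Matrix.map_apply, Matrix.add_apply, Matrix.smul_apply, smul_eq_mul,
      Pi.add_apply, Pi.smul_apply]
    push_cast
    ring
  have hGy : (G.map Complex.ofReal) *ᵥ y₀ = μ • w s := by
    rw [hGdef, map_mul_ofReal, ← mulVec_mulVec, hwy, hGc, add_mulVec, smul_mulVec]
    exact heig s
  -- the test vector
  set ξ : (Fin n ⊕ Fin n) → ℂ := Sum.elim ((-μ) • y₀) y₀ with hξdef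
  have hξ : ξ ≠ 0 := by
    intro h
    apply hy0
    funext i
    exact congrFun h (Sum.inr i)
  have hpos := re_quadratic_pos hRs ξ hξ
  -- compute the quadratic form
  have hmap : (fromBlocks Φ G Gᵀ Φ).map Complex.ofReal
      = fromBlocks (Φ.map Complex.ofReal) (G.map Complex.ofReal)
        ((G.map Complex.ofReal)ᵀ) (Φ.map Complex.ofReal) := by
    rw [fromBlocks_map, transpose_map]
  have hΦt : Φᵀ = Φ := by
    rw [← conjTranspose_eq_transpose_of_trivial]
    exact hΦ.isHermitian
  have hΦct : (Φ.map Complex.ofReal)ᵀ = Φ.map Complex.ofReal := by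
    rw [← transpose_map, hΦt]
  set c : ℂ := star y₀ ⬝ᵥ ((Φ.map Complex.ofReal) *ᵥ y₀) with hcdef
  have hcre : 0 < c.re := re_quadratic_pos hΦ y₀ hy0
  have hsw : star (μ • w s) = (starRingEnd ℂ μ) • star (w s) := by
    rw [star_smul]
    rfl
  have hyw : y₀ ⬝ᵥ star (w s) = c := by
    rw [← hwy, ← realMat_mulVec_star, dotProduct_mulVec, ← mulVec_transpose, hΦct,
      dotProduct_comm]
  have hTterm : star y₀ ⬝ᵥ ((G.map Complex.ofReal)ᵀ *ᵥ ((-μ) • y₀))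
      = -(μ * ((starRingEnd ℂ) μ * c)) := by
    rw [mulVec_smul, dotProduct_smul, dot_tmulVec (star y₀) (G.map Complex.ofReal) y₀,
      realMat_mulVec_star, hGy, hsw, dotProduct_smul, hyw]
    simp only [smul_eq_mul]
    ring
  have hform : (star ξ ⬝ᵥ (((fromBlocks Φ G Gᵀ Φ).map Complex.ofReal) *ᵥ ξ))
      = (1 - μ * (starRingEnd ℂ) μ) * c := by
    rw [hmap, hξdef]
    have hstarξ : star (Sum.elim ((-μ) • y₀) y₀) = Sum.elim (star ((-μ) • y₀)) (star y₀) := by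
      funext j; cases j <;> rfl
    rw [hstarξ, fromBlocks_mulVec, sumElim_dotProduct_sumElim]
    simp only [Sum.elim_comp_inl, Sum.elim_comp_inr]
    rw [mulVec_smul, hwy, hGy]
    rw [show (-μ) • w s + μ • w s = 0 from by rw [← add_smul]; simp]
    rw [dotProduct_zero, zero_add, dotProduct_add, hTterm]
    rw [show star y₀ ⬝ᵥ w s = c from by rw [← hwy, hcdef]]
    ring
  rw [hform] at hpos
  have hre : ((1 - μ * (starRingEnd ℂ) μ) * c).re = (1 - Complex.normSq μ) * c.re := by
    rw [Complex.mul_conj]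
    rw [show ((1 : ℂ) - (Complex.normSq μ : ℂ)) = ((1 - Complex.normSq μ : ℝ) : ℂ) from by
      push_cast; ring]
    rw [Complex.mul_re, Complex.ofReal_re, Complex.ofReal_im]
    ring
  rw [hre] at hpos
  have hns : Complex.normSq μ < 1 := by nlinarith [hcre, hpos]
  have habs : ‖μ‖ ^ 2 = Complex.normSq μ := by
    rw [Complex.sq_norm]
  nlinarith [norm_nonneg μ, habs, hns]

end StepDE
/-- Theorem 4 of the paper: feasibility of the data-dependent LMI obtained
via the S-procedure certifies that the noisy data `(X, U₋)` are informative for consensus: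
the gain `K = FΦ⁻¹` renders `I_N ⊗ A + αL ⊗ BK` Schur stable for every system `(A, B)`
consistent with the data under the noise bound.  The 6×6 block matrix `M` (block sizes
`n, n, p, n, p, n`) is encoded by nested `fromBlocks`, with block index type
`(Fin n ⊕ Fin n) ⊕ ((Fin p ⊕ Fin n) ⊕ (Fin p ⊕ Fin n))`. -/
theorem noisy_data_informative_for_consensus {n p T N : ℕ}
    (Xplus Xminus : Matrix (Fin n) (Fin T) ℝ) (Uminus : Matrix (Fin p) (Fin T) ℝ)
    (N11 : Matrix (Fin n) (Fin n) ℝ) (hN11 : N11.PosDef)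
    (N22 : Matrix (Fin T) (Fin T) ℝ) (hN22 : (-N22).PosDef) (hN22symm : N22.IsSymm)
    (N12 : Matrix (Fin n) (Fin T) ℝ)
    (𝒩 : Matrix (Fin n ⊕ Fin T) (Fin n ⊕ Fin T) ℝ)
    (h𝒩 : 𝒩 = Matrix.fromBlocks N11 N12 N12ᵀ N22)
    (L : Matrix (Fin N) (Fin N) ℝ) (hLsymm : L.IsSymm) (hLpd : L.PosDef)
    (lam1 lamN : ℝ)
    (hlam1mem : lam1 ∈ spectrum ℝ L) (hlamNmem : lamN ∈ spectrum ℝ L)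
    (hbounds : ∀ μ ∈ spectrum ℝ L, lam1 ≤ μ ∧ μ ≤ lamN)
    (α ν : ℝ) (hα : α = 2 / (lam1 + lamN)) (hν : ν = (lamN - lam1) / (lamN + lam1))
    (Φ : Matrix (Fin n) (Fin n) ℝ) (hΦ : Φ.PosDef)
    (F : Matrix (Fin p) (Fin n) ℝ)
    (ε γ τ : ℝ) (hε : 0 ≤ ε) (hγ : 0 < γ) (hτ : 0 < τ)
    (M : Matrix ((Fin n ⊕ Fin n) ⊕ ((Fin p ⊕ Fin n) ⊕ (Fin p ⊕ Fin n)))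
        ((Fin n ⊕ Fin n) ⊕ ((Fin p ⊕ Fin n) ⊕ (Fin p ⊕ Fin n))) ℝ)
    (hM : M = Matrix.fromBlocks
      (Matrix.fromBlocks (Φ - γ • 1) 0 0 0)
      (Matrix.fromCols (Matrix.fromBlocks 0 0 0 Φ) 0)
      (Matrix.fromRows (Matrix.fromBlocks 0 0 0 Φᵀ) 0)
      (Matrix.fromBlocks
        (Matrix.fromBlocks ((-(τ * ν ^ 2)) • 1) F Fᵀ Φ)
        (Matrix.fromBlocks 0 0 Fᵀ 0)
        (Matrix.fromBlocks 0 F 0 0)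
        (Matrix.fromBlocks (τ • 1) 0 0 1)))
    (Z : Matrix ((Fin n ⊕ Fin n) ⊕ ((Fin p ⊕ Fin n) ⊕ (Fin p ⊕ Fin n))) (Fin n ⊕ Fin T) ℝ)
    (hZ : Z = Matrix.fromRows
      (Matrix.fromBlocks 1 Xplus 0 (-Xminus))
      (Matrix.fromRows (Matrix.fromBlocks 0 (-Uminus) 0 0) 0))
    (hLMI : (M - ε • (Z * 𝒩 * Zᵀ)).PosDef)
    (W : Matrix (Fin n ⊕ (Fin n ⊕ Fin p)) (Fin n ⊕ Fin T) ℝ)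
    (hW : W = Matrix.fromBlocks 1 Xplus 0 (Matrix.fromRows (-Xminus) (-Uminus))) :
    ∀ (A : Matrix (Fin n) (Fin n) ℝ) (B : Matrix (Fin n) (Fin p) ℝ),
      (Matrix.fromCols (1 : Matrix (Fin n) (Fin n) ℝ) (Matrix.fromCols A B) * W * 𝒩 *
          Wᵀ * (Matrix.fromCols (1 : Matrix (Fin n) (Fin n) ℝ)
            (Matrix.fromCols A B))ᵀ).PosSemidef →
      SchurStableR ((1 : Matrix (Fin N) (Fin N) ℝ) ⊗ₖ A + (α • L) ⊗ₖ (B * F * Φ⁻¹)) := by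
  intro A B hcons
  have hlam1pos : 0 < lam1 := pos_of_mem_spectrum_posdef hLpd hlam1mem
  have hlamNpos : 0 < lamN := pos_of_mem_spectrum_posdef hLpd hlamNmem
  have hsum : 0 < lam1 + lamN := by linarith
  have hΦdet : IsUnit Φ.det := hΦ.det_pos.ne'.isUnit
  have hQ := stepB Xplus Xminus Uminus 𝒩 Φ F ε γ τ ν hε M hM Z hZ hLMI W hW A B hcons
  have hδall : ∀ lam : ℝ, lam1 ≤ lam → lam ≤ lamN → |α * lam - 1| ≤ ν := by
    intro lam hlo hhi
    have h1 : α * lam - 1 = (2 * lam - (lam1 + lamN)) / (lam1 + lamN) := by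
      rw [hα]
      field_simp
    have h2 : ν = (lamN - lam1) / (lam1 + lamN) := by
      rw [hν, add_comm lamN lam1]
    rw [h1, h2, abs_div, abs_of_pos hsum]
    gcongr
    rw [abs_le]
    constructor <;> linarith
  have hGeq : ∀ t : ℝ, (A + t • (B * F * Φ⁻¹)) * Φ = A * Φ + t • (B * F) := by
    intro t
    rw [add_mul, Matrix.smul_mul, Matrix.mul_assoc (B * F) Φ⁻¹ Φ,
      Matrix.nonsing_inv_mul _ hΦdet, mul_one]
  exact stepDE L hLsymm hLpd lam1 lamN α hbounds Φ hΦ A (B * F * Φ⁻¹)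
    (fun lam hlo hhi => by
      rw [hGeq (α * lam)]
      exact stepC Φ hΦ F A B γ τ ν hγ hτ hQ (α * lam) (hδall lam hlo hhi))
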